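/- Fix an integer m ≥ 1 and a real p with 1 ≤ p < ∞. The sequence x given by x_k = exp(k^{m-1}) belongs to C_p^G(Δ_G^m) but does not belong to C_p^G(Δ_G^{m-1}); hence the inclusion C_p^G(Δ_G^{m-1}) ⊂ C_p^G(Δ_G^m) is strict. -/
import Mathlib


/-- Classical `m`-th order forward difference
`Δ^m y_k = ∑_{v=0}^m (−1)^v C(m,v) y_{k+v}`. -/
noncomputable def fdiff (m : ℕ) (y : ℕ → ℝ) (k : ℕ) : ℝ :=
  ∑ v ∈ Finset.range (m + 1), (-1 : ℝ) ^ v * (m.choose v : ℝ) * y (k + v)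

/-- The Cesàro mean `(1/n) ∑_{k=1}^n Δ^m (log x)_k`. -/
noncomputable def cesaro (m : ℕ) (x : ℕ → ℝ) (n : ℕ) : ℝ :=
  (1 / (n : ℝ)) * ∑ k ∈ Finset.Icc 1 n, fdiff m (fun j => Real.log (x j)) k

/-- Membership in the bigeometric Cesàro difference space `C_p^G(Δ_G^m)`. -/
def memCpG (m : ℕ) (p : ℝ) (x : ℕ → ℝ) : Prop :=
  (∀ k, 1 ≤ k → 0 < x k) ∧ Summable (fun n : ℕ => |cesaro m x n| ^ p)

/-- Membership in the bigeometric Cesàro difference space `C_∞^G(Δ_G^m)`. -/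
def memCinfG (m : ℕ) (x : ℕ → ℝ) : Prop :=
  (∀ k, 1 ≤ k → 0 < x k) ∧ ∃ C : ℝ, ∀ n : ℕ, |cesaro m x n| ≤ C

lemma fdiff_shift (m : ℕ) (y : ℕ → ℝ) (k : ℕ) :
    fdiff m (fun j => y (j + 1)) k = fdiff m y (k + 1) := by
  unfold fdiff
  refine Finset.sum_congr rfl fun v _ => ?_
  ring_nf

lemma fdiff_sub (m : ℕ) (y z : ℕ → ℝ) (k : ℕ) :
    fdiff m (fun j => y j - z j) k = fdiff m y k - fdiff m z k := by
  unfold fdiff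
  rw [← Finset.sum_sub_distrib]
  refine Finset.sum_congr rfl fun v _ => by ring

lemma fdiff_succ (m : ℕ) (y : ℕ → ℝ) (k : ℕ) :
    fdiff (m + 1) y k = fdiff m y k - fdiff m y (k + 1) := by
  have hA : fdiff m y k =
      (∑ v ∈ Finset.range m, (-1 : ℝ) ^ (v+1) * (m.choose (v+1) : ℝ) * y (k + (v+1))) + y k := by
    unfold fdiff
    rw [Finset.sum_range_succ']
    simp
  have hB : fdiff m y (k+1) =
      ∑ v ∈ Finset.range (m+1), (-1 : ℝ) ^ v * (m.choose v : ℝ) * y (k + (v+1)) := by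
    unfold fdiff
    refine Finset.sum_congr rfl fun v _ => ?_
    rw [show k + 1 + v = k + (v+1) by omega]
  have hchoose : ∀ v, ((m+1).choose (v+1) : ℝ) = (m.choose v : ℝ) + (m.choose (v+1) : ℝ) := by
    intro v; exact_mod_cast congrArg (Nat.cast : ℕ → ℝ) (Nat.choose_succ_succ m v)
  have key : fdiff (m+1) y k =
      (∑ v ∈ Finset.range (m+1), (-1 : ℝ) ^ (v+1) * ((m+1).choose (v+1) : ℝ) * y (k + (v+1)))
        + y k := by
    unfold fdiff
    rw [Finset.sum_range_succ']
    simp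
  rw [key]
  have hsplit : ∀ v ∈ Finset.range (m+1),
      (-1 : ℝ) ^ (v+1) * ((m+1).choose (v+1) : ℝ) * y (k + (v+1)) =
      (-1 : ℝ) ^ (v+1) * (m.choose (v+1) : ℝ) * y (k + (v+1))
        - (-1 : ℝ) ^ v * (m.choose v : ℝ) * y (k + (v+1)) := by
    intro v _
    rw [hchoose v]; ring
  rw [Finset.sum_congr rfl hsplit, Finset.sum_sub_distrib]
  have hlast : ∑ v ∈ Finset.range (m+1), (-1 : ℝ) ^ (v+1) * (m.choose (v+1) : ℝ) * y (k + (v+1))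
      = ∑ v ∈ Finset.range m, (-1 : ℝ) ^ (v+1) * (m.choose (v+1) : ℝ) * y (k + (v+1)) := by
    rw [Finset.sum_range_succ]
    simp [Nat.choose_succ_self]
  rw [hlast, ← hB]
  linarith [hA]

lemma fdiff_D (m : ℕ) (y : ℕ → ℝ) (k : ℕ) :
    fdiff (m + 1) y k = fdiff m (fun j => y j - y (j + 1)) k := by
  rw [fdiff_sub, fdiff_shift, fdiff_succ]

lemma fdiff_sum {ι : Type*} (m : ℕ) (s : Finset ι) (F : ι → ℕ → ℝ) (k : ℕ) :
    fdiff m (fun j => ∑ i ∈ s, F i j) k = ∑ i ∈ s, fdiff m (F i) k := by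
  unfold fdiff
  rw [Finset.sum_comm]
  refine Finset.sum_congr rfl fun v _ => by rw [Finset.mul_sum]

lemma fdiff_const_mul (m : ℕ) (c : ℝ) (y : ℕ → ℝ) (k : ℕ) :
    fdiff m (fun j => c * y j) k = c * fdiff m y k := by
  unfold fdiff
  rw [Finset.mul_sum]
  refine Finset.sum_congr rfl fun v _ => by ring

lemma pow_sub_succ_pow (d : ℕ) (j : ℕ) :
    (j : ℝ) ^ d - ((j + 1 : ℕ) : ℝ) ^ d
      = ∑ i ∈ Finset.range d, (-(d.choose i : ℝ)) * (j : ℝ) ^ i := by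
  push_cast
  rw [add_pow]
  rw [Finset.sum_range_succ]
  simp [neg_mul]
  exact Finset.sum_congr rfl fun i _ => by ring

lemma fdiff_pow_eq_zero : ∀ m d, d < m → ∀ k, fdiff m (fun j => (j : ℝ) ^ d) k = 0 := by
  intro m
  induction m with
  | zero => intro d hd; omega
  | succ m ih =>
    intro d hd k
    rw [fdiff_D]
    have hfun : (fun j : ℕ => (j : ℝ) ^ d - ((j + 1 : ℕ) : ℝ) ^ d)
        = fun j : ℕ => ∑ i ∈ Finset.range d, (-(d.choose i : ℝ)) * (j : ℝ) ^ i := by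
      funext j; exact pow_sub_succ_pow d j
    show fdiff m (fun j : ℕ => (j : ℝ) ^ d - ((j + 1 : ℕ) : ℝ) ^ d) k = 0
    rw [hfun, fdiff_sum]
    refine Finset.sum_eq_zero fun i hi => ?_
    have hi' := Finset.mem_range.mp hi
    rw [fdiff_const_mul, ih i (by omega) k]
    ring

lemma fdiff_pow_self (d : ℕ) (k : ℕ) :
    fdiff d (fun j => (j : ℝ) ^ d) k = (-1 : ℝ) ^ d * (d.factorial : ℝ) := by
  induction d generalizing k with
  | zero => simp [fdiff]
  | succ d ih =>
    rw [fdiff_D]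
    have hfun : (fun j : ℕ => (j : ℝ) ^ (d+1) - ((j + 1 : ℕ) : ℝ) ^ (d+1))
        = fun j : ℕ => ∑ i ∈ Finset.range (d+1), (-((d+1).choose i : ℝ)) * (j : ℝ) ^ i := by
      funext j; exact pow_sub_succ_pow (d+1) j
    show fdiff d (fun j : ℕ => (j : ℝ) ^ (d+1) - ((j + 1 : ℕ) : ℝ) ^ (d+1)) k
        = (-1 : ℝ) ^ (d+1) * ((d+1).factorial : ℝ)
    rw [hfun, fdiff_sum, Finset.sum_range_succ]
    have h0 : ∀ i ∈ Finset.range d,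
        fdiff d (fun j : ℕ => (-((d+1).choose i : ℝ)) * (j : ℝ) ^ i) k = 0 := by
      intro i hi
      rw [fdiff_const_mul, fdiff_pow_eq_zero d i (Finset.mem_range.mp hi) k]; ring
    rw [Finset.sum_eq_zero h0, fdiff_const_mul, ih]
    simp [Nat.choose_succ_self_right, Nat.factorial_succ]
    ring

/-- the sequence `x_k = exp(k^{m-1})` lies in `C_p^G(Δ_G^m)` but
not in `C_p^G(Δ_G^{m-1})`; hence the inclusion of Statement 9 is strict. -/
theorem CpG_pred_subset_strict (m : ℕ) (hm : 1 ≤ m) (p : ℝ) (hp : 1 ≤ p) :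
    memCpG m p (fun k => Real.exp ((k : ℝ) ^ (m - 1))) ∧
      ¬ memCpG (m - 1) p (fun k => Real.exp ((k : ℝ) ^ (m - 1))) := by
  obtain ⟨d, rfl⟩ : ∃ d, m = d + 1 := ⟨m - 1, by omega⟩
  simp only [Nat.add_sub_cancel]
  set x : ℕ → ℝ := fun k => Real.exp ((k : ℝ) ^ d) with hx
  have hlog : (fun j : ℕ => Real.log (x j)) = fun j : ℕ => (j : ℝ) ^ d := by
    funext j; simp [hx, Real.log_exp]
  constructor
  · refine ⟨fun k _ => Real.exp_pos _, ?_⟩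
    have hc : ∀ n, cesaro (d + 1) x n = 0 := by
      intro n
      unfold cesaro
      rw [hlog, Finset.sum_eq_zero fun k _ => fdiff_pow_eq_zero (d + 1) d (by omega) k]
      ring
    have hz : (fun n : ℕ => |cesaro (d + 1) x n| ^ p) = fun _ : ℕ => (0 : ℝ) := by
      funext n
      rw [hc n, abs_zero, Real.zero_rpow (by linarith)]
    rw [hz]
    exact summable_zero
  · rintro ⟨-, hsum⟩
    have hc : ∀ n : ℕ, 1 ≤ n →
        cesaro d x n = (-1 : ℝ) ^ d * (d.factorial : ℝ) := by
      intro n hn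
      unfold cesaro
      rw [hlog, Finset.sum_congr rfl fun k _ => fdiff_pow_self d k,
        Finset.sum_const, Nat.card_Icc, nsmul_eq_mul]
      have hn0 : (n : ℝ) ≠ 0 := Nat.cast_ne_zero.mpr (by omega)
      have : ((n + 1 - 1 : ℕ) : ℝ) = (n : ℝ) := by norm_num
      rw [this]
      field_simp
    have h0 := hsum.tendsto_atTop_zero
    have h1 : ∀ᶠ n : ℕ in Filter.atTop, (1 : ℝ) ≤ |cesaro d x n| ^ p := by
      filter_upwards [Filter.eventually_ge_atTop 1] with n hn
      rw [hc n hn]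
      have habs : |(-1 : ℝ) ^ d * (d.factorial : ℝ)| = (d.factorial : ℝ) := by
        rw [abs_mul, abs_pow, abs_neg, abs_one, one_pow, one_mul,
          abs_of_nonneg (by positivity)]
      rw [habs]
      calc (1 : ℝ) = 1 ^ p := (Real.one_rpow p).symm
        _ ≤ (d.factorial : ℝ) ^ p :=
          Real.rpow_le_rpow (by norm_num)
            (by exact_mod_cast Nat.one_le_iff_ne_zero.mpr d.factorial_ne_zero)
            (by linarith)
    have := ge_of_tendsto h0 h1
    linarith
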